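/- For a core-language algorithm that is syntactically safe and satisfies Assumption (A): a ∈ fire_1(bias(θ), ψ̄) if and only if θ < thr̄, and b ∈ fire_1(bias(θ), ψ̄) if and only if θ > 1 − thr̄, where ψ̄ is the global predicate and thr̄ = max(1 − thr_u^1, 1 − thr_m^{1,k}/2) is the border threshold. -/

import Mathlib

open Classical

namespace HO

/-! ### Values

`none` is the undefined value `?`; defined values are natural numbers, where
`some 0` plays the role of `a` and `some 1` the role of `b` (so `a < b`). -/

abbrev Val := Option ℕ

def aVal : ℕ := 0
def bVal : ℕ := 1

/-! ### Operations -/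

inductive Op where
  | min : Op
  | smor : Op

/-- Minimum of a multiset of defined values (`none` if the multiset is empty). -/
noncomputable def msMin (S : Multiset ℕ) : Option ℕ :=
  if h : S.toFinset.Nonempty then some (S.toFinset.min' h) else none

/-- Smallest most frequent value of a multiset (`none` if the multiset is empty). -/
noncomputable def msSmor (S : Multiset ℕ) : Option ℕ :=
  if h : (S.toFinset.filter fun v => ∀ w ∈ S.toFinset, S.count w ≤ S.count v).Nonempty
  then some ((S.toFinset.filter fun v => ∀ w ∈ S.toFinset, S.count w ≤ S.count v).min' h)
  else none

noncomputable def Op.apply : Op → Multiset ℕ → Option ℕ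
  | Op.min, S => msMin S
  | Op.smor, S => msSmor S

/-! ### Rounds

A round consists of at most one `uni` instruction followed by a list of `mult`
instructions with non-increasing thresholds, all thresholds lying in `[0,1)`. -/

structure Round where
  uniThr : Option ℝ
  mults : List (ℝ × Op)
  wfU : ∀ t ∈ uniThr, 0 ≤ t ∧ t < 1
  wfM : ∀ q ∈ mults, 0 ≤ q.1 ∧ q.1 < 1
  sorted : (mults.map Prod.fst).Chain' (· ≥ ·)

def Round.hasUni (R : Round) : Prop := R.uniThr.isSome = true
def Round.hasMult (R : Round) : Prop := R.mults ≠ []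

/-- `thr_u^i`: the threshold of the uni instruction, `-1` if absent. -/
noncomputable def Round.thrU (R : Round) : ℝ := R.uniThr.getD (-1)

noncomputable def minThr : List ℝ → ℝ
  | [] => -1
  | [t] => t
  | t :: ts => min t (minThr ts)

/-- `thr_m^{i,k}`: the smallest threshold of a mult instruction, `-1` if absent. -/
noncomputable def Round.thrM (R : Round) : ℝ := minThr (R.mults.map Prod.fst)

/-- Result of the first applicable `mult` instruction. -/
noncomputable def firstMult (n : ℕ) (S : Multiset ℕ) : List (ℝ × Op) → Option ℕ
  | [] => none
  | (t, op) :: rest =>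
      if 1 < S.toFinset.card ∧ t * n < (S.card : ℝ) then op.apply S
      else firstMult n S rest

/-- `update_i(H)`: the result of the first instruction of the round whose condition
is satisfied by `H − {?}`, and `?` (i.e. `none`) if no condition applies. -/
noncomputable def Round.update (R : Round) (n : ℕ) (H : Multiset Val) : Option ℕ :=
  if ∃ t ∈ R.uniThr,
      (H.filterMap id).toFinset.card = 1 ∧ t * n < ((H.filterMap id).card : ℝ)
  then msMin (H.filterMap id)
  else firstMult n (H.filterMap id) R.mults

/-! ### Communication predicates for a round -/

/-- A conjunction of atomic communication predicates for one round: possibly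
`φ_=` (field `eq`) and possibly `φ_thr` (field `thr`, with `0 ≤ thr < 1`). -/
structure RoundPred where
  eq : Bool
  thr : Option ℝ
  wf : ∀ t ∈ thr, 0 ≤ t ∧ t < 1

/-- `thr_i(ψ)`: the threshold appearing in the predicate, `-1` if absent. -/
noncomputable def RoundPred.thrVal (φ : RoundPred) : ℝ := φ.thr.getD (-1)

def RoundPred.isEqualizer (φ : RoundPred) : Prop := φ.eq = true

/-- Satisfaction of a round predicate by a tuple of heard-of multisets. -/
def RoundPred.sat {α : Type} (φ : RoundPred) (n : ℕ) (Hs : Fin n → Multiset α) : Prop :=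
  (φ.eq = true → ∀ p q, Hs p = Hs q) ∧
  ∀ t ∈ φ.thr, ∀ p, t * n < ((Hs p).card : ℝ)

/-- Logical implication between round predicates. -/
def RoundPred.implies (φ φ' : RoundPred) : Prop :=
  ∀ (α : Type) (n : ℕ) (Hs : Fin n → Multiset α), φ.sat n Hs → φ'.sat n Hs

/-! ### Tuples of values -/

/-- The multiset of values of a tuple. -/
def msetOf {n : ℕ} (f : Fin n → Val) : Multiset Val := Finset.univ.val.map f

def soloB (n : ℕ) : Fin n → Val := fun _ => some bVal
def soloA (n : ℕ) : Fin n → Val := fun _ => some aVal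
def soloQ (n : ℕ) : Fin n → Val := fun _ => none

/-- `bias(θ)`: a tuple over `{a,b}` with `θ·n` entries equal to `b`. -/
def isBias {n : ℕ} (θ : ℝ) (f : Fin n → Val) : Prop :=
  (∀ p, f p = some aVal ∨ f p = some bVal) ∧
  ((Finset.univ.filter fun p => f p = some bVal).card : ℝ) = θ * n

/-- `spread = bias(1/2)`. -/
def isSpread {n : ℕ} (f : Fin n → Val) : Prop := isBias (1/2) f

/-- `bias^?(θ)`: a tuple over `{?,b}` with `θ·n` entries equal to `b`. -/
def isBiasQ {n : ℕ} (θ : ℝ) (f : Fin n → Val) : Prop :=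
  (∀ p, f p = none ∨ f p = some bVal) ∧
  ((Finset.univ.filter fun p => f p = some bVal).card : ℝ) = θ * n

/-- `bias_a^?(θ)`: a tuple over `{?,a}` with `θ·n` entries equal to `a`. -/
def isBiasQa {n : ℕ} (θ : ℝ) (f : Fin n → Val) : Prop :=
  (∀ p, f p = none ∨ f p = some aVal) ∧
  ((Finset.univ.filter fun p => f p = some aVal).card : ℝ) = θ * n

/-! ### Round transitions -/

/-- Round transition `f →[φ]_i f'`: every process receives a sub-multiset of the
multiset of sent values, the tuple of heard-of multisets jointly satisfies `φ`,
and every process updates its variable accordingly. -/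
def roundTrans (R : Round) (φ : RoundPred) {n : ℕ} (f f' : Fin n → Val) : Prop :=
  ∃ Hs : Fin n → Multiset Val,
    (∀ p, Hs p ≤ msetOf f) ∧ φ.sat n Hs ∧ ∀ p, f' p = R.update n (Hs p)

/-- `d ∈ fire_i(f,φ)`. -/
def fire (R : Round) (φ : RoundPred) {n : ℕ} (f : Fin n → Val) (d : Val) : Prop :=
  ∃ f' : Fin n → Val, roundTrans R φ f f' ∧ ∃ p, f' p = d

/-! ### Algorithms -/

/-- An algorithm of the core language: rounds `1,…,r` (`r ≥ 2`), with a designated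
input-update round `ir` (`1 ≤ ir < r`). -/
structure Algo where
  r : ℕ
  rounds : ℕ → Round
  ir : ℕ
  two_le_r : 2 ≤ r
  one_le_ir : 1 ≤ ir
  ir_lt_r : ir < r

noncomputable def Algo.thrU (A : Algo) (i : ℕ) : ℝ := (A.rounds i).thrU
noncomputable def Algo.thrM (A : Algo) (i : ℕ) : ℝ := (A.rounds i).thrM
def Algo.hasUni (A : Algo) (i : ℕ) : Prop := (A.rounds i).hasUni
def Algo.hasMult (A : Algo) (i : ℕ) : Prop := (A.rounds i).hasMult

/-- A phase predicate: a conjunction of atomic predicates for every round. -/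
abbrev PhasePred := ℕ → RoundPred

/-- Phase transition `(f,d) →ψ (f',d')`. -/
def phaseTrans (A : Algo) (ψ : PhasePred) {n : ℕ} (f d f' d' : Fin n → Val) : Prop :=
  ∃ g : ℕ → Fin n → Val,
    g 0 = f ∧
    (∀ i, 1 ≤ i → i ≤ A.r → roundTrans (A.rounds i) (ψ i) (g (i - 1)) (g i)) ∧
    (∀ p, f' p = if g A.ir p = none then f p else g A.ir p) ∧
    (∀ p, d' p = if d p = none then g A.r p else d p)

/-- A chain of round transitions for rounds `k,…,l`. -/
def roundChain (A : Algo) (ψ : PhasePred) (k l : ℕ) {n : ℕ} (f f' : Fin n → Val) : Prop :=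
  ∃ g : ℕ → Fin n → Val,
    g (k - 1) = f ∧ g l = f' ∧
    ∀ i, k ≤ i → i ≤ l → roundTrans (A.rounds i) (ψ i) (g (i - 1)) (g i)

/-! ### Syntactic notions -/

/-- Round `i` is preserving w.r.t. `ψ`. -/
def Algo.preserving (A : Algo) (ψ : PhasePred) (i : ℕ) : Prop :=
  ¬ A.hasUni i ∨ ¬ A.hasMult i ∨ (ψ i).thrVal < max (A.thrU i) (A.thrM i)

/-- Round `i` is solo-safe w.r.t. `ψ`. -/
def Algo.soloSafe (A : Algo) (ψ : PhasePred) (i : ℕ) : Prop :=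
  0 ≤ A.thrU i ∧ A.thrU i ≤ (ψ i).thrVal

/-- The border threshold `thr̄ = max(1 − thr_u^1, 1 − thr_m^{1,k}/2)`. -/
noncomputable def Algo.borderThr (A : Algo) : ℝ :=
  max (1 - A.thrU 1) (1 - A.thrM 1 / 2)

/-- `ψ` is a decider: all rounds are solo-safe w.r.t. `ψ`. -/
def Algo.decider (A : Algo) (ψ : PhasePred) : Prop :=
  ∀ i, 1 ≤ i → i ≤ A.r → A.soloSafe ψ i

/-- `ψ` is a unifier. -/
def Algo.unifier (A : Algo) (ψ : PhasePred) : Prop :=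
  A.thrM 1 ≤ (ψ 1).thrVal ∧
  (A.thrU 1 ≤ (ψ 1).thrVal ∨ A.borderThr ≤ (ψ 1).thrVal) ∧
  ∃ i, 1 ≤ i ∧ i ≤ A.ir ∧ (ψ i).isEqualizer ∧
    (∀ j, 2 ≤ j → j ≤ i → ¬ A.preserving ψ j) ∧
    (∀ j, i < j → j ≤ A.ir → A.soloSafe ψ j)

/-- The algorithm is syntactically safe. -/
def Algo.syntSafe (A : Algo) : Prop :=
  A.hasMult 1 ∧
  (∀ i, 1 ≤ i → i ≤ A.r → A.hasUni i) ∧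
  (∀ q ∈ (A.rounds 1).mults, q.2 = Op.smor) ∧
  1 - A.thrU (A.ir + 1) ≤ A.thrM 1 / 2 ∧
  1 - A.thrU (A.ir + 1) ≤ A.thrU 1

/-- Assumption (A) relative to the global predicate `gl`. -/
def Algo.assumptionA (A : Algo) (gl : PhasePred) : Prop :=
  ∀ i, 1 ≤ i → i ≤ A.r →
    (∀ j, 1 ≤ j → j < i → ¬ A.preserving gl j) →
    (A.hasUni i → (gl i).thrVal ≤ A.thrU i) ∧
    (A.hasMult i → (gl i).thrVal ≤ A.thrM i)

/-- Proviso (P): the global predicate has no equalizer and round `ir+1` has no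
mult instruction. -/
def Algo.provisoP (A : Algo) (gl : PhasePred) : Prop :=
  (∀ i, 1 ≤ i → i ≤ A.r → ¬ (gl i).isEqualizer) ∧ ¬ A.hasMult (A.ir + 1)

/-- Removing all mult instructions of a round. -/
def Round.dropMults (R : Round) : Round :=
  { uniThr := R.uniThr, mults := [], wfU := R.wfU,
    wfM := by simp, sorted := by first | exact List.IsChain.nil | exact List.chain'_nil | constructor | simp [List.Chain'] }

/-- Removing all mult instructions of round `i` of an algorithm. -/
def Algo.dropMultsAt (A : Algo) (i : ℕ) : Algo :=
  { A with rounds := fun j => if j = i then (A.rounds j).dropMults else A.rounds j }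

/-! ### Communication predicates, executions, consensus -/

/-- A communication predicate `(G ψ̄) ∧ F(ψ^1 ∧ F(ψ^2 ∧ … ∧ F ψ^k))`:
a global phase predicate and sporadic phase predicates `ψ^1,…,ψ^k`. -/
structure CommPred where
  glob : PhasePred
  k : ℕ
  spor : ℕ → PhasePred

/-- Roundwise implication between phase predicates of an algorithm. -/
def predImplies (A : Algo) (ψ ψ' : PhasePred) : Prop :=
  ∀ i, 1 ≤ i → i ≤ A.r → (ψ i).implies (ψ' i)

/-- An execution of an algorithm respecting a communication predicate: an infinite
sequence of phase transitions under the global predicate, together with an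
increasing sequence of times at which the sporadic predicates hold. -/
structure Exec (A : Algo) (C : CommPred) (n : ℕ) where
  inp : ℕ → Fin n → Val
  dec : ℕ → Fin n → Val
  inp0 : ∀ p, inp 0 p ≠ none
  dec0 : ∀ p, dec 0 p = none
  step : ∀ s, phaseTrans A C.glob (inp s) (dec s) (inp (s + 1)) (dec (s + 1))
  sporTime : ℕ → ℕ
  mono : StrictMono sporTime
  sporStep : ∀ i, 1 ≤ i → i ≤ C.k →
    phaseTrans A (C.spor i) (inp (sporTime i)) (dec (sporTime i))
      (inp (sporTime i + 1)) (dec (sporTime i + 1))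

/-- Agreement: in every reachable state, any two non-`?` decision values coincide. -/
def Agreement (A : Algo) (C : CommPred) : Prop :=
  ∀ n, 0 < n → ∀ E : Exec A C n, ∀ s p q v w,
    E.dec s p = some v → E.dec s q = some w → v = w

/-- Termination: every execution reaches a state where all processes have decided. -/
def Termination (A : Algo) (C : CommPred) : Prop :=
  ∀ n, 0 < n → ∀ E : Exec A C n, ∃ s, ∀ p, E.dec s p ≠ none

/-- Solving consensus: agreement and termination. -/
def SolvesConsensus (A : Algo) (C : CommPred) : Prop :=
  Agreement A C ∧ Termination A C

/-! ### Auxiliary lemmas -/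

lemma aVal_ne_bVal : aVal ≠ bVal := by simp [aVal, bVal]

lemma minThr_spec (l : List ℝ) (hl : l ≠ []) :
    minThr l ∈ l ∧ ∀ x ∈ l, minThr l ≤ x := by
  induction l with
  | nil => exact absurd rfl hl
  | cons t ts ih =>
    cases ts with
    | nil =>
      refine ⟨by simp [minThr], ?_⟩
      intro x hx
      simp only [List.mem_singleton, List.mem_cons, List.not_mem_nil, or_false] at hx
      simp [minThr, hx]
    | cons u us =>
      obtain ⟨hm, hle⟩ := ih (by simp)
      have he : minThr (t :: u :: us) = min t (minThr (u :: us)) := rfl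
      constructor
      · rcases min_cases t (minThr (u :: us)) with ⟨h1, _⟩ | ⟨h1, _⟩
        · rw [he, h1]; exact List.mem_cons_self
        · rw [he, h1]; exact List.mem_cons_of_mem _ hm
      · intro x hx
        rcases List.mem_cons.mp hx with rfl | hx
        · rw [he]; exact min_le_left _ _
        · rw [he]; exact le_trans (min_le_right _ _) (hle x hx)

lemma Round.thrU_spec (R : Round) (h : R.hasUni) :
    R.uniThr = some R.thrU ∧ 0 ≤ R.thrU ∧ R.thrU < 1 := by
  unfold Round.hasUni at h
  cases hu : R.uniThr with
  | none => rw [hu] at h; simp at h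
  | some t =>
    have hb := R.wfU t (by rw [hu]; rfl)
    have ht : R.thrU = t := by simp [Round.thrU, hu]
    exact ⟨by rw [ht], ht ▸ hb.1, ht ▸ hb.2⟩

lemma Round.thrM_spec (R : Round) (h : R.hasMult) :
    0 ≤ R.thrM ∧ R.thrM < 1 ∧ (∃ q ∈ R.mults, q.1 = R.thrM) ∧
      ∀ q ∈ R.mults, R.thrM ≤ q.1 := by
  have hl : R.mults.map Prod.fst ≠ [] := by
    simpa [Round.hasMult] using h
  obtain ⟨hm, hle⟩ := minThr_spec _ hl
  rw [List.mem_map] at hm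
  obtain ⟨q, hq, hq1⟩ := hm
  have hb := R.wfM q hq
  refine ⟨?_, ?_, ⟨q, hq, hq1⟩, ?_⟩
  · rw [Round.thrM, ← hq1]; exact hb.1
  · rw [Round.thrM, ← hq1]; exact hb.2
  · intro p hp
    exact hle p.1 (List.mem_map.mpr ⟨p, hp, rfl⟩)

lemma firstMult_cons (n : ℕ) (S : Multiset ℕ) (t : ℝ) (op : Op) (l : List (ℝ × Op)) :
    firstMult n S ((t, op) :: l) =
      if 1 < S.toFinset.card ∧ t * n < (S.card : ℝ) then op.apply S
      else firstMult n S l := rfl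

lemma firstMult_eq_some (n : ℕ) (S : Multiset ℕ) (d : ℕ) :
    ∀ l : List (ℝ × Op), firstMult n S l = some d →
      ∃ q ∈ l, (1 < S.toFinset.card ∧ q.1 * n < (S.card : ℝ)) ∧ q.2.apply S = some d := by
  intro l
  induction l with
  | nil => intro h; simp [firstMult] at h
  | cons q l ih =>
    obtain ⟨t, op⟩ := q
    intro h
    rw [firstMult_cons] at h
    split_ifs at h with hc
    · exact ⟨(t, op), List.mem_cons_self, hc, h⟩
    · obtain ⟨q, hq, h1, h2⟩ := ih h
      exact ⟨q, List.mem_cons_of_mem _ hq, h1, h2⟩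

lemma firstMult_fires (n : ℕ) (S : Multiset ℕ) (hc : 1 < S.toFinset.card) :
    ∀ l : List (ℝ × Op), (∀ q ∈ l, q.2 = Op.smor) →
      (∃ q ∈ l, q.1 * n < (S.card : ℝ)) → firstMult n S l = msSmor S := by
  intro l
  induction l with
  | nil => intro _ hex; simp at hex
  | cons q l ih =>
    obtain ⟨t, op⟩ := q
    intro hall hex
    rw [firstMult_cons]
    split_ifs with hcond
    · have hop : op = Op.smor := hall (t, op) (List.mem_cons_self)
      rw [hop]; rfl
    · refine ih (fun q hq => hall q (List.mem_cons_of_mem _ hq)) ?_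
      obtain ⟨q0, hq0, ht0⟩ := hex
      rcases List.mem_cons.mp hq0 with rfl | hq0'
      · exact absurd ⟨hc, ht0⟩ hcond
      · exact ⟨q0, hq0', ht0⟩

/-- The canonical multiset with `k` copies of `b` and `m` copies of `a`. -/
noncomputable def Hkm (k m : ℕ) : Multiset Val :=
  Multiset.replicate k (some bVal) + Multiset.replicate m (some aVal)

noncomputable def Skm (k m : ℕ) : Multiset ℕ :=
  Multiset.replicate k bVal + Multiset.replicate m aVal

lemma Hkm_card (k m : ℕ) : (Hkm k m).card = k + m := by
  simp [Hkm]

lemma Skm_card (k m : ℕ) : (Skm k m).card = k + m := by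
  simp [Skm]

lemma Hkm_eq_map (k m : ℕ) : Hkm k m = (Skm k m).map some := by
  unfold Hkm Skm
  rw [Multiset.map_add, Multiset.map_replicate, Multiset.map_replicate]

lemma Hkm_filterMap (k m : ℕ) : (Hkm k m).filterMap id = Skm k m := by
  rw [Hkm_eq_map, Multiset.filterMap_map]
  exact Multiset.filterMap_some _

lemma mem_Hkm {k m : ℕ} {x : Val} (hx : x ∈ Hkm k m) : x = some bVal ∨ x = some aVal := by
  rw [Hkm, Multiset.mem_add] at hx
  rcases hx with hx | hx
  · exact Or.inl (Multiset.eq_of_mem_replicate hx)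
  · exact Or.inr (Multiset.eq_of_mem_replicate hx)

lemma Skm_count_b (k m : ℕ) : (Skm k m).count bVal = k := by
  simp [Skm, Multiset.count_replicate, aVal, bVal]

lemma Skm_count_a (k m : ℕ) : (Skm k m).count aVal = m := by
  simp [Skm, Multiset.count_replicate, aVal, bVal]

lemma Hkm_count_b (k m : ℕ) : (Hkm k m).count (some bVal) = k := by
  simp [Hkm, Multiset.count_replicate, aVal, bVal]

lemma Hkm_count_a (k m : ℕ) : (Hkm k m).count (some aVal) = m := by
  simp [Hkm, Multiset.count_replicate, aVal, bVal]

lemma Skm_toFinset (k m : ℕ) (hk : k ≠ 0) (hm : m ≠ 0) :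
    (Skm k m).toFinset = {bVal, aVal} := by
  ext x
  simp [Skm, Multiset.toFinset_add, hk, hm]

lemma Skm_toFinset_card (k m : ℕ) (hk : k ≠ 0) (hm : m ≠ 0) :
    (Skm k m).toFinset.card = 2 := by
  rw [Skm_toFinset k m hk hm]
  simp [aVal, bVal]

lemma msMin_replicate (v m : ℕ) (hm : m ≠ 0) :
    msMin (Multiset.replicate m v) = some v := by
  unfold msMin
  have hne : (Multiset.replicate m v).toFinset.Nonempty := ⟨v, by simp [hm]⟩
  rw [dif_pos hne]
  congr 1
  apply le_antisymm
  · exact Finset.min'_le _ v (by simp [hm])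
  · apply Finset.le_min'
    intro y hy
    simp [Multiset.toFinset_replicate, hm] at hy
    exact le_of_eq hy.symm

lemma msSmor_Skm (k m : ℕ) (hk : k ≠ 0) (hm : m ≠ 0) :
    msSmor (Skm k m) = some (if m < k then bVal else aVal) := by
  have hT := Skm_toFinset k m hk hm
  have hcb := Skm_count_b k m
  have hca := Skm_count_a k m
  have hmem : ∀ v, v ∈ (Skm k m).toFinset ↔ (v = bVal ∨ v = aVal) := by
    intro v; rw [hT]; simp
  have hP : ∀ v, (∀ w ∈ (Skm k m).toFinset, (Skm k m).count w ≤ (Skm k m).count v) ↔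
      (k ≤ (Skm k m).count v ∧ m ≤ (Skm k m).count v) := by
    intro v
    constructor
    · intro h
      have h1 := h bVal ((hmem bVal).mpr (Or.inl rfl))
      have h2 := h aVal ((hmem aVal).mpr (Or.inr rfl))
      rw [hcb] at h1
      rw [hca] at h2
      exact ⟨h1, h2⟩
    · rintro ⟨h1, h2⟩ w hw
      rcases (hmem w).mp hw with rfl | rfl
      · rw [hcb]; exact h1
      · rw [hca]; exact h2
  by_cases hmk : m < k
  · have hF : ((Skm k m).toFinset.filter fun v => ∀ w ∈ (Skm k m).toFinset,
        (Skm k m).count w ≤ (Skm k m).count v) = {bVal} := by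
      ext v
      rw [Finset.mem_filter, Finset.mem_singleton, hmem, hP]
      constructor
      · rintro ⟨rfl | rfl, h1, h2⟩
        · rfl
        · exfalso; rw [hca] at h1; omega
      · rintro rfl
        rw [hcb]
        exact ⟨Or.inl rfl, le_rfl, by omega⟩
    unfold msSmor
    rw [hF, dif_pos (Finset.singleton_nonempty _), Finset.min'_singleton, if_pos hmk]
  · have h0 : aVal ∈ (Skm k m).toFinset.filter fun v => ∀ w ∈ (Skm k m).toFinset,
        (Skm k m).count w ≤ (Skm k m).count v := by
      rw [Finset.mem_filter]
      refine ⟨(hmem aVal).mpr (Or.inr rfl), (hP aVal).mpr ?_⟩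
      rw [hca]
      constructor
      · omega
      · exact le_rfl
    unfold msSmor
    rw [dif_pos ⟨aVal, h0⟩]
    have hmin : ((Skm k m).toFinset.filter fun v => ∀ w ∈ (Skm k m).toFinset,
        (Skm k m).count w ≤ (Skm k m).count v).min' ⟨aVal, h0⟩ = aVal :=
      Nat.le_antisymm (Finset.min'_le _ _ h0) (Nat.zero_le _)
    rw [hmin, if_neg hmk]

/-- update on a solo-`b` heard-of set. -/
lemma update_b (R : Round) (hu : R.hasUni) (n k : ℕ) (hk : k ≠ 0)
    (hc : R.thrU * n < (k : ℝ)) : R.update n (Hkm k 0) = some bVal := by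
  obtain ⟨he, _, _⟩ := R.thrU_spec hu
  unfold Round.update
  rw [Hkm_filterMap]
  have hS : Skm k 0 = Multiset.replicate k bVal := by simp [Skm]
  rw [if_pos, hS, msMin_replicate _ _ hk]
  refine ⟨R.thrU, by rw [he]; rfl, ?_, ?_⟩
  · rw [hS]; simp [hk]
  · rw [hS]; simpa using hc

/-- update on a solo-`a` heard-of set. -/
lemma update_a (R : Round) (hu : R.hasUni) (n m : ℕ) (hm : m ≠ 0)
    (hc : R.thrU * n < (m : ℝ)) : R.update n (Hkm 0 m) = some aVal := by
  obtain ⟨he, _, _⟩ := R.thrU_spec hu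
  unfold Round.update
  rw [Hkm_filterMap]
  have hS : Skm 0 m = Multiset.replicate m aVal := by simp [Skm]
  rw [if_pos, hS, msMin_replicate _ _ hm]
  refine ⟨R.thrU, by rw [he]; rfl, ?_, ?_⟩
  · rw [hS]; simp [hm]
  · rw [hS]; simpa using hc

/-- update on a mixed heard-of set. -/
lemma update_mult (R : Round) (hall : ∀ q ∈ R.mults, q.2 = Op.smor)
    (n k m : ℕ) (hk : k ≠ 0) (hm : m ≠ 0)
    (hc : R.thrM * n < ((k + m : ℕ) : ℝ)) (hM : R.hasMult) :
    R.update n (Hkm k m) = some (if m < k then bVal else aVal) := by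
  unfold Round.update
  rw [Hkm_filterMap]
  have hcard2 : (Skm k m).toFinset.card = 2 := Skm_toFinset_card k m hk hm
  rw [if_neg, firstMult_fires n _ (by omega) _ hall ?ex, msSmor_Skm k m hk hm]
  case ex =>
    obtain ⟨_, _, ⟨q, hq, hq1⟩, _⟩ := R.thrM_spec hM
    refine ⟨q, hq, ?_⟩
    rw [hq1, Skm_card]
    exact hc
  rintro ⟨t, ht, hcard, _⟩
  rw [hcard2] at hcard
  omega

/-- Inversion of `update` on canonical heard-of sets. -/
lemma update_inv (R : Round) (hall : ∀ q ∈ R.mults, q.2 = Op.smor)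
    (n k m d : ℕ) (h : R.update n (Hkm k m) = some d) :
    (m = 0 ∧ k ≠ 0 ∧ d = bVal ∧ R.thrU * n < (k : ℝ)) ∨
    (k = 0 ∧ m ≠ 0 ∧ d = aVal ∧ R.thrU * n < (m : ℝ)) ∨
    (k ≠ 0 ∧ m ≠ 0 ∧ R.thrM * n < ((k + m : ℕ) : ℝ) ∧
      ((m < k ∧ d = bVal) ∨ (k ≤ m ∧ d = aVal))) := by
  unfold Round.update at h
  rw [Hkm_filterMap] at h
  split_ifs at h with hcond
  · -- uni branch
    obtain ⟨t, ht, hcard, hlt⟩ := hcond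
    have htu : R.thrU = t := by
      simp only [Round.thrU]
      rw [Option.mem_def] at ht
      rw [ht]; rfl
    rw [Skm_card] at hlt
    by_cases hk : k = 0
    · subst hk
      have hm : m ≠ 0 := by
        intro hm0
        subst hm0
        simp [Skm] at hcard
      right; left
      have hS : Skm 0 m = Multiset.replicate m aVal := by simp [Skm]
      rw [hS, msMin_replicate _ _ hm] at h
      refine ⟨rfl, hm, by exact (Option.some_injective _ h).symm, ?_⟩
      rw [htu]; simpa using hlt
    · by_cases hm : m = 0
      · subst hm
        left
        have hS : Skm k 0 = Multiset.replicate k bVal := by simp [Skm]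
        rw [hS, msMin_replicate _ _ hk] at h
        refine ⟨rfl, hk, (Option.some_injective _ h).symm, ?_⟩
        rw [htu]; simpa using hlt
      · exfalso
        rw [Skm_toFinset_card k m hk hm] at hcard
        omega
  · -- mult branch
    obtain ⟨q, hq, ⟨hcard, hlt⟩, happ⟩ := firstMult_eq_some n _ d _ h
    have hk : k ≠ 0 := by
      intro hk0; subst hk0
      have hS : Skm 0 m = Multiset.replicate m aVal := by simp [Skm]
      rw [hS] at hcard
      rcases Nat.eq_zero_or_pos m with hm0 | hm0
      · subst hm0; simp at hcard
      · rw [Multiset.toFinset_replicate] at hcard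
        simp [Nat.pos_iff_ne_zero.mp hm0] at hcard
    have hm : m ≠ 0 := by
      intro hm0; subst hm0
      have hS : Skm k 0 = Multiset.replicate k bVal := by simp [Skm]
      rw [hS] at hcard
      rw [Multiset.toFinset_replicate] at hcard
      simp [hk] at hcard
    right; right
    have hop : q.2 = Op.smor := hall q hq
    rw [hop] at happ
    have hsm : msSmor (Skm k m) = some d := happ
    rw [msSmor_Skm k m hk hm] at hsm
    have hd := Option.some_injective _ hsm
    have hthr : R.thrM * n < ((k + m : ℕ) : ℝ) := by
      obtain ⟨_, _, _, hle⟩ := R.thrM_spec (show R.hasMult by intro he; rw [he] at hq; simp at hq)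
      have h1 : R.thrM * n ≤ q.1 * n := by
        apply mul_le_mul_of_nonneg_right (hle q hq) (Nat.cast_nonneg n)
      rw [Skm_card] at hlt
      exact lt_of_le_of_lt h1 hlt
    refine ⟨hk, hm, hthr, ?_⟩
    by_cases hmk : m < k
    · left; exact ⟨hmk, by rw [← hd, if_pos hmk]⟩
    · right; exact ⟨by omega, by rw [← hd, if_neg hmk]⟩

/-- Characterization of `fire` via a single heard-of multiset. -/
lemma fire_iff (R : Round) (φ : RoundPred) {n : ℕ} (hn : 0 < n) (f : Fin n → Val) (d : Val) :
    fire R φ f d ↔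
      ∃ H : Multiset Val, H ≤ msetOf f ∧ (∀ t ∈ φ.thr, t * n < (H.card : ℝ)) ∧
        R.update n H = d := by
  constructor
  · rintro ⟨f', ⟨Hs, hle, hsat, hupd⟩, p, hp⟩
    exact ⟨Hs p, hle p, fun t ht => hsat.2 t ht p, by rw [← hupd p, hp]⟩
  · rintro ⟨H, hle, hthr, hupd⟩
    exact ⟨fun _ => R.update n H,
      ⟨fun _ => H, fun _ => hle, ⟨fun _ p q => rfl, fun t ht p => hthr t ht⟩, fun _ => rfl⟩,
      ⟨0, hn⟩, hupd⟩

lemma mem_msetOf {n : ℕ} (f : Fin n → Val) (x : Val) (hx : x ∈ msetOf f) :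
    ∃ p, f p = x := by
  rw [msetOf, Multiset.mem_map] at hx
  obtain ⟨p, _, hp⟩ := hx
  exact ⟨p, hp⟩

lemma count_msetOf {n : ℕ} (f : Fin n → Val) (x : Val) :
    (msetOf f).count x = (Finset.univ.filter fun p => f p = x).card := by
  rw [msetOf, Multiset.count_map]
  rw [Finset.card_filter]
  rw [Finset.sum_boole]
  simp only [eq_comm]
  rfl

set_option maxHeartbeats 1000000 in
/-- Lemma 13 and its corollary.  For a syntactically safe
core-language algorithm satisfying Assumption (A), under the global predicate
`gl`: `a ∈ fire_1(bias(θ), gl)` iff `θ < thr̄`, and `b ∈ fire_1(bias(θ), gl)`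
iff `θ > 1 − thr̄` (for all sufficiently large `n`). -/
theorem fire_first_round_iff_border (A : Algo) (gl : PhasePred)
    (hs : A.syntSafe) (hA : A.assumptionA gl) :
    ∀ θ : ℝ, ∃ n₀ : ℕ, ∀ n : ℕ, n₀ ≤ n → ∀ f : Fin n → Val, isBias θ f →
      (fire (A.rounds 1) (gl 1) f (some aVal) ↔ θ < A.borderThr) ∧
      (fire (A.rounds 1) (gl 1) f (some bVal) ↔ 1 - A.borderThr < θ) := by
  intro θ
  classical
  refine ⟨max 1 (if h : A.thrM 1 / 2 < θ then Nat.ceil (2 / (θ - A.thrM 1 / 2)) else 1), ?_⟩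
  intro n hn f hf
  have hn1 : 1 ≤ n := le_trans (le_max_left _ _) hn
  have hnpos : (0:ℝ) < n := by exact_mod_cast hn1
  set R := A.rounds 1 with hRdef
  have hu : R.hasUni := hs.2.1 1 le_rfl (by have := A.two_le_r; omega)
  have hM : R.hasMult := hs.1
  have hops : ∀ q ∈ R.mults, q.2 = Op.smor := hs.2.2.1
  obtain ⟨hUe, hU0, hU1⟩ := R.thrU_spec hu
  obtain ⟨hM0, hM1, _, _⟩ := R.thrM_spec hM
  have hAA := hA 1 le_rfl (by have := A.two_le_r; omega) (by intro j h1 h2; omega)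
  have hTu : (gl 1).thrVal ≤ R.thrU := hAA.1 hu
  have hTm : (gl 1).thrVal ≤ R.thrM := hAA.2 hM
  have hbord : A.borderThr = max (1 - R.thrU) (1 - R.thrM / 2) := rfl
  set B := (Finset.univ.filter fun p : Fin n => f p = some bVal).card with hBdef
  have hB : (B:ℝ) = θ * n := hf.2
  have hBn : B ≤ n := by
    have := Finset.card_filter_le Finset.univ (fun p : Fin n => f p = some bVal)
    simpa using this
  have hnB : ((n - B : ℕ):ℝ) = (n:ℝ) - B := by
    push_cast [Nat.cast_sub hBn]; ring
  have hcb : (msetOf f).count (some bVal) = B := count_msetOf f _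
  have hca : (msetOf f).count (some aVal) = n - B := by
    rw [count_msetOf]
    have hsum := Finset.card_filter_add_card_filter_not
      (s := Finset.univ) (p := fun p : Fin n => f p = some bVal)
    have hfe : (Finset.univ.filter fun p : Fin n => f p = some aVal)
        = (Finset.univ.filter fun p : Fin n => ¬ f p = some bVal) := by
      apply Finset.filter_congr
      intro p _
      rcases hf.1 p with h | h <;> simp [h, aVal, bVal]
    rw [hfe]
    have hcu : (Finset.univ : Finset (Fin n)).card = n := by simp
    omega
  have hHle : ∀ k m : ℕ, k ≤ B → m ≤ n - B → Hkm k m ≤ msetOf f := by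
    intro k m hk hm
    rw [Multiset.le_iff_count]
    intro x
    by_cases hxb : x = some bVal
    · subst hxb; rw [Hkm_count_b, hcb]; exact hk
    · by_cases hxa : x = some aVal
      · subst hxa; rw [Hkm_count_a, hca]; exact hm
      · have h0 : (Hkm k m).count x = 0 := by
          rw [Multiset.count_eq_zero]
          intro hx
          rcases mem_Hkm hx with h | h
          · exact hxb h
          · exact hxa h
        rw [h0]; exact Nat.zero_le _
  have hthr_ok : ∀ (c : ℝ), (gl 1).thrVal * n < c → ∀ t ∈ (gl 1).thr, t * n < c := by
    intro c hc t ht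
    have hvt : (gl 1).thrVal = t := by
      unfold RoundPred.thrVal
      rw [Option.mem_def.mp ht]
      rfl
    rwa [hvt] at hc
  have hdecomp : ∀ H : Multiset Val, H ≤ msetOf f →
      ∃ k m : ℕ, k ≤ B ∧ m ≤ n - B ∧ H = Hkm k m := by
    intro H hle
    have hvals : ∀ x ∈ H, x = some aVal ∨ x = some bVal := by
      intro x hx
      obtain ⟨p, hp⟩ := mem_msetOf f x (Multiset.mem_of_le hle hx)
      rw [← hp]; exact hf.1 p
    refine ⟨H.count (some bVal), H.count (some aVal), ?_, ?_, ?_⟩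
    · have := Multiset.le_iff_count.mp hle (some bVal); rwa [hcb] at this
    · have := Multiset.le_iff_count.mp hle (some aVal); rwa [hca] at this
    · apply Multiset.ext.mpr
      intro x
      by_cases hxb : x = some bVal
      · subst hxb; rw [Hkm_count_b]
      · by_cases hxa : x = some aVal
        · subst hxa; rw [Hkm_count_a]
        · have h1 : H.count x = 0 := Multiset.count_eq_zero.mpr
            (fun hx => by rcases hvals x hx with h | h; exacts [hxa h, hxb h])
          have h2 : (Hkm (H.count (some bVal)) (H.count (some aVal))).count x = 0 :=
            Multiset.count_eq_zero.mpr
              (fun hx => by rcases mem_Hkm hx with h | h; exacts [hxb h, hxa h])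
          rw [h1, h2]
  constructor
  · -- firing a
    rw [fire_iff R (gl 1) (by omega) f (some aVal), hbord]
    constructor
    · rintro ⟨H, hle, hthr, hupd⟩
      obtain ⟨k, m, hk, hm, hHeq⟩ := hdecomp H hle
      rw [hHeq] at hupd
      rcases update_inv R hops n k m aVal hupd with
        ⟨_, _, hd, _⟩ | ⟨_, hm0, _, hlt⟩ | ⟨hk0, hm0, hlt, hcase⟩
      · exact absurd hd aVal_ne_bVal
      · refine lt_max_iff.mpr (Or.inl ?_)
        have hmle : (m:ℝ) ≤ (n:ℝ) - B := by
          rw [← hnB]; exact_mod_cast hm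
        nlinarith
      · rcases hcase with ⟨_, hd⟩ | ⟨hkm, _⟩
        · exact absurd hd aVal_ne_bVal
        · refine lt_max_iff.mpr (Or.inr ?_)
          have hmle : (m:ℝ) ≤ (n:ℝ) - B := by
            rw [← hnB]; exact_mod_cast hm
          have hkm' : (k:ℝ) ≤ (m:ℝ) := by exact_mod_cast hkm
          have hlt' : R.thrM * n < (k:ℝ) + m := by
            rw [← Nat.cast_add]; exact hlt
          nlinarith
    · intro hθ
      by_cases h1 : θ < 1 - R.thrU
      · have hm1 : R.thrU * n < ((n - B : ℕ):ℝ) := by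
          rw [hnB]; nlinarith
        have hmne : n - B ≠ 0 := by
          have h0 : (0:ℝ) < ((n - B : ℕ):ℝ) :=
            lt_of_le_of_lt (mul_nonneg hU0 (Nat.cast_nonneg n)) hm1
          have : 0 < n - B := by exact_mod_cast h0
          omega
        refine ⟨Hkm 0 (n - B), hHle 0 _ (Nat.zero_le _) le_rfl, ?_,
          update_a R hu n _ hmne hm1⟩
        intro t ht
        rw [Hkm_card]
        refine hthr_ok _ ?_ t ht
        calc (gl 1).thrVal * n ≤ R.thrU * n :=
              mul_le_mul_of_nonneg_right hTu (Nat.cast_nonneg n)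
          _ < ((n - B : ℕ):ℝ) := hm1
          _ ≤ ((0 + (n - B) : ℕ):ℝ) := by norm_num
      · have h2 : θ < 1 - R.thrM / 2 := (lt_max_iff.mp hθ).resolve_left h1
        have h1' : 1 - R.thrU ≤ θ := not_lt.mp h1
        have hBne : B ≠ 0 := by
          have h0 : (0:ℝ) < (B:ℝ) := by nlinarith
          have : 0 < B := by exact_mod_cast h0
          omega
        have hthrgen : ∀ k m : ℕ, R.thrM * n < ((k + m : ℕ):ℝ) →
            ∀ t ∈ (gl 1).thr, t * n < (((Hkm k m).card : ℕ):ℝ) := by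
          intro k m hc t ht
          rw [Hkm_card]
          refine hthr_ok _ ?_ t ht
          calc (gl 1).thrVal * n ≤ R.thrM * n :=
                mul_le_mul_of_nonneg_right hTm (Nat.cast_nonneg n)
            _ < ((k + m : ℕ):ℝ) := hc
        by_cases h3 : 2 * B ≤ n
        · have hmne : n - B ≠ 0 := by omega
          have hc : R.thrM * n < ((B + (n - B) : ℕ):ℝ) := by
            have he : B + (n - B) = n := by omega
            rw [he]; nlinarith
          refine ⟨Hkm B (n - B), hHle _ _ le_rfl le_rfl, hthrgen _ _ hc, ?_⟩
          rw [update_mult R hops n B (n - B) hBne hmne hc hM]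
          rw [if_neg (by omega)]
        · have hmne : n - B ≠ 0 := by
            have h0 : (0:ℝ) < ((n - B : ℕ):ℝ) := by
              rw [hnB]; nlinarith
            have : 0 < n - B := by exact_mod_cast h0
            omega
          have hc : R.thrM * n < (((n - B) + (n - B) : ℕ):ℝ) := by
            have he : (((n - B) + (n - B) : ℕ):ℝ) = 2 * ((n:ℝ) - B) := by
              push_cast [Nat.cast_sub hBn]; ring
            rw [he]; nlinarith
          refine ⟨Hkm (n - B) (n - B), hHle _ _ (by omega) le_rfl, hthrgen _ _ hc, ?_⟩
          rw [update_mult R hops n (n - B) (n - B) hmne hmne hc hM]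
          rw [if_neg (lt_irrefl _)]
  · -- firing b
    rw [fire_iff R (gl 1) (by omega) f (some bVal), hbord]
    constructor
    · rintro ⟨H, hle, hthr, hupd⟩
      obtain ⟨k, m, hk, hm, hHeq⟩ := hdecomp H hle
      rw [hHeq] at hupd
      rcases update_inv R hops n k m bVal hupd with
        ⟨_, _, _, hlt⟩ | ⟨_, _, hd, _⟩ | ⟨hk0, hm0, hlt, hcase⟩
      · have hkB : (k:ℝ) ≤ B := by exact_mod_cast hk
        have htu : R.thrU < θ := by nlinarith
        have hmx : 1 - max (1 - R.thrU) (1 - R.thrM / 2) ≤ R.thrU := by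
          have := le_max_left (1 - R.thrU) (1 - R.thrM / 2); linarith
        linarith
      · exact absurd hd.symm aVal_ne_bVal
      · rcases hcase with ⟨hmk, _⟩ | ⟨_, hd⟩
        · have hkB : (k:ℝ) ≤ B := by exact_mod_cast hk
          have hmk' : (m:ℝ) ≤ (k:ℝ) := by
            have : m ≤ k := le_of_lt hmk
            exact_mod_cast this
          have hlt' : R.thrM * n < (k:ℝ) + m := by
            rw [← Nat.cast_add]; exact hlt
          have htm : R.thrM / 2 < θ := by nlinarith
          have hmx : 1 - max (1 - R.thrU) (1 - R.thrM / 2) ≤ R.thrM / 2 := by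
            have := le_max_right (1 - R.thrU) (1 - R.thrM / 2); linarith
          linarith
        · exact absurd hd.symm aVal_ne_bVal
    · intro hθ
      have hthrgen : ∀ k m : ℕ, R.thrM * n < ((k + m : ℕ):ℝ) →
          ∀ t ∈ (gl 1).thr, t * n < (((Hkm k m).card : ℕ):ℝ) := by
        intro k m hc t ht
        rw [Hkm_card]
        refine hthr_ok _ ?_ t ht
        calc (gl 1).thrVal * n ≤ R.thrM * n :=
              mul_le_mul_of_nonneg_right hTm (Nat.cast_nonneg n)
          _ < ((k + m : ℕ):ℝ) := hc
      by_cases h1 : R.thrU < θ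
      · have hk1 : R.thrU * n < ((B : ℕ):ℝ) := by rw [hB]; nlinarith
        have hBne : B ≠ 0 := by
          have h0 : (0:ℝ) < (B:ℝ) :=
            lt_of_le_of_lt (mul_nonneg hU0 (Nat.cast_nonneg n)) hk1
          have : 0 < B := by exact_mod_cast h0
          omega
        refine ⟨Hkm B 0, hHle _ _ le_rfl (Nat.zero_le _), ?_,
          update_b R hu n _ hBne hk1⟩
        intro t ht
        rw [Hkm_card]
        refine hthr_ok _ ?_ t ht
        calc (gl 1).thrVal * n ≤ R.thrU * n :=
              mul_le_mul_of_nonneg_right hTu (Nat.cast_nonneg n)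
          _ < ((B : ℕ):ℝ) := hk1
          _ ≤ ((B + 0 : ℕ):ℝ) := by norm_num
      · have h1' : θ ≤ R.thrU := not_lt.mp h1
        have h2 : R.thrM / 2 < θ := by
          rcases max_cases (1 - R.thrU) (1 - R.thrM / 2) with ⟨hmax, _⟩ | ⟨hmax, _⟩ <;>
            rw [hmax] at hθ <;> linarith
        have hBne : B ≠ 0 := by
          have h0 : (0:ℝ) < (B:ℝ) := by nlinarith
          have : 0 < B := by exact_mod_cast h0
          omega
        have hBltn : B < n := by
          have h0 : (B:ℝ) < n := by nlinarith
          exact_mod_cast h0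
        by_cases h3 : n < 2 * B
        · have hmne : n - B ≠ 0 := by omega
          have hc : R.thrM * n < ((B + (n - B) : ℕ):ℝ) := by
            have he : B + (n - B) = n := by omega
            rw [he]; nlinarith
          refine ⟨Hkm B (n - B), hHle _ _ le_rfl le_rfl, hthrgen _ _ hc, ?_⟩
          rw [update_mult R hops n B (n - B) hBne hmne hc hM]
          rw [if_pos (by omega)]
        · -- use the large-n bound
          have hceil : Nat.ceil (2 / (θ - A.thrM 1 / 2)) ≤ n := by
            have hd : (if h : A.thrM 1 / 2 < θ then Nat.ceil (2 / (θ - A.thrM 1 / 2)) else 1)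
                = Nat.ceil (2 / (θ - A.thrM 1 / 2)) := dif_pos h2
            calc Nat.ceil (2 / (θ - A.thrM 1 / 2))
                = (if h : A.thrM 1 / 2 < θ then Nat.ceil (2 / (θ - A.thrM 1 / 2)) else 1) :=
                  hd.symm
              _ ≤ max 1 (if h : A.thrM 1 / 2 < θ then Nat.ceil (2 / (θ - A.thrM 1 / 2)) else 1) :=
                  le_max_right _ _
              _ ≤ n := hn
          have hεpos : (0:ℝ) < θ - R.thrM / 2 := by linarith
          have hn2 : (2:ℝ) / (θ - R.thrM / 2) ≤ n :=
            le_trans (Nat.le_ceil _) (by exact_mod_cast hceil)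
          have hεn : (2:ℝ) ≤ (θ - R.thrM / 2) * n := by
            rw [div_le_iff₀ hεpos] at hn2
            nlinarith
          have h2B : R.thrM * n + 4 ≤ 2 * (B:ℝ) := by nlinarith
          have hB2 : 2 ≤ B := by
            have h4 : (2:ℝ) ≤ (B:ℝ) := by nlinarith [mul_nonneg hM0 (Nat.cast_nonneg n)]
            exact_mod_cast h4
          have hc : R.thrM * n < ((B + (B - 1) : ℕ):ℝ) := by
            have he : ((B + (B - 1) : ℕ):ℝ) = 2 * (B:ℝ) - 1 := by
              push_cast [Nat.cast_sub (show 1 ≤ B by omega)]; ring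
            rw [he]; linarith
          refine ⟨Hkm B (B - 1), hHle _ _ le_rfl (by omega), hthrgen _ _ hc, ?_⟩
          rw [update_mult R hops n B (B - 1) hBne (by omega) hc hM]
          rw [if_pos (by omega)]


end HO
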